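/- The multi-controlled-X ladder operator L_α is a bijection on 𝔽₂^{α_{k−2}+1}, and the composition of two interleaved single-layer MCX circuits with a recursively defined ladder on half the gates equals L_α: specifically, with U_L, U_{X'}, U_R as defined in Algorithm 2, U_R ∘ U_{X'} ∘ U_L = L_α for every vector α of k−1 strictly increasing nonnegative integers with k ≥ 3. -/

import Mathlib

/-! The MCX ladder operator `L_α` and its decomposition (Algorithm 2).
States are `ℕ`-indexed bit vectors (`ℕ → ZMod 2`); all operators act as the identity
on the wires above `α_{k−2}`. -/

/-- One MCX gate with controls the wires in `[lo, hi)` and target `hi`. -/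
def applyGate (s : ℕ → ZMod 2) (lo hi : ℕ) : ℕ → ZMod 2 :=
  fun j => if j = hi then s j + ∏ t ∈ Finset.Ico lo hi, s t else s j

/-- The ladder operator `L_α` for a vector `α` of `k−1` integers (given as the first
`k−1` values of `α : ℕ → ℕ`): wire `α_0` receives `⊕ ∏_{j<α_0} x_j`, and wire `α_i`
(for `1 ≤ i ≤ k−2`) receives `⊕ ∏_{j=α_{i−1}}^{α_i−1} x_j` (products of the input
values `x`); all other wires are unchanged. -/
def Lalpha (k : ℕ) (α : ℕ → ℕ) (x : ℕ → ZMod 2) : ℕ → ZMod 2 :=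
  (List.range (k - 1)).foldl
    (fun s i => fun j =>
      if j = α i then
        x (α i) + ∏ t ∈ Finset.Ico (if i = 0 then 0 else α (i - 1)) (α i), x t
      else s j)
    x

/-- The layer `U_L`: the MCX gates with targets `α_{2i−1}` (controls
`α_{2i−2}, …, α_{2i−1}−1`) for `i = 1, …, ⌈k/2⌉−2`, plus the gate with target
`α_{k−2}` and controls `α_{k−3}, …, α_{k−2}−1`. -/
def UL (k : ℕ) (α : ℕ → ℕ) (x : ℕ → ZMod 2) : ℕ → ZMod 2 :=
  applyGate
    ((List.range' 1 ((k + 1) / 2 - 2)).foldl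
      (fun s i => applyGate s (α (2 * i - 2)) (α (2 * i - 1))) x)
    (α (k - 3)) (α (k - 2))

/-- The layer `U_R`: the MCX gate with target `α_0` (controls `0, …, α_0−1`) and the
gates with targets `α_{2i}` (controls `α_{2i−1}, …, α_{2i}−1`) for
`i = 1, …, ⌈k/2⌉−2`. -/
def UR (k : ℕ) (α : ℕ → ℕ) (x : ℕ → ZMod 2) : ℕ → ZMod 2 :=
  (List.range' 1 ((k + 1) / 2 - 2)).foldl
    (fun s i => applyGate s (α (2 * i - 1)) (α (2 * i)))
    (applyGate x 0 (α 0))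

/-- The list of wires `X'` used by the recursive call of Algorithm 2:
`α_0`, then for `i = 1, …, ⌈k/2⌉−2` the wires `α_{2i−2}+1, …, α_{2i−1}−1` and
`α_{2i−1}+1, …, α_{2i}`, and finally `α_{k−4}+1, …, α_{k−3}` when `k` is even. -/
def Xlist (k : ℕ) (α : ℕ → ℕ) : List ℕ :=
  α 0 ::
    ((List.range' 1 ((k + 1) / 2 - 2)).flatMap (fun i =>
        List.range' (α (2 * i - 2) + 1) (α (2 * i - 1) - α (2 * i - 2) - 1) ++
        List.range' (α (2 * i - 1) + 1) (α (2 * i) - α (2 * i - 1)))) ++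
    (if k % 2 = 0 then List.range' (α (k - 4) + 1) (α (k - 3) - α (k - 4)) else [])

/-- The vector `α'` of the recursive call: `α'_i = α_{2(i+1)} − α_0 − (i+1)` for the
loop entries, and `α_{k−3} − α_0 − k/2 + 2` as the last entry when `k` is even. -/
def alpha' (k : ℕ) (α : ℕ → ℕ) (i : ℕ) : ℕ :=
  if i + 1 ≤ (k + 1) / 2 - 2 then α (2 * (i + 1)) - α 0 - (i + 1)
  else α (k - 3) - α 0 + 2 - k / 2

/-- The middle operator `U_{X'}`: the ladder `L_{α'}` applied to the subsequence of
wires `X'`, acting as the identity on all the other wires. -/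
def UX (k : ℕ) (α : ℕ → ℕ) (x : ℕ → ZMod 2) : ℕ → ZMod 2 :=
  fun w =>
    if w ∈ Xlist k α then
      Lalpha (k / 2) (alpha' k α) (fun p => x ((Xlist k α).getD p 0))
        ((Xlist k α).idxOf w)
    else x w

namespace MCXProof

lemma applyGate_ne (s : ℕ → ZMod 2) (lo hi j : ℕ) (h : j ≠ hi) :
    applyGate s lo hi j = s j := by simp [applyGate, h]

lemma applyGate_eq (s : ℕ → ZMod 2) (lo hi : ℕ) :
    applyGate s lo hi hi = s hi + ∏ t ∈ Finset.Ico lo hi, s t := by simp [applyGate]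

lemma foldA_ne (T : ℕ → ℕ) (F : ℕ → ZMod 2) (L : List ℕ) (x : ℕ → ZMod 2) (j : ℕ)
    (h : ∀ i ∈ L, T i ≠ j) :
    (L.foldl (fun s i => fun p => if p = T i then F i else s p) x) j = x j := by
  induction L generalizing x with
  | nil => rfl
  | cons a L ih =>
    rw [List.foldl_cons, ih _ (fun i hi => h i (List.mem_cons_of_mem _ hi))]
    show (if j = T a then F a else x j) = x j
    rw [if_neg (fun he => h a (List.mem_cons_self) he.symm)]

lemma foldA_eq (T : ℕ → ℕ) (F : ℕ → ZMod 2) (L : List ℕ) (x : ℕ → ZMod 2) (i j : ℕ)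
    (hi : i ∈ L) (hj : T i = j) (huniq : ∀ i' ∈ L, T i' = j → i' = i) :
    (L.foldl (fun s i => fun p => if p = T i then F i else s p) x) j = F i := by
  induction L generalizing x with
  | nil => cases hi
  | cons a L ih =>
    rw [List.foldl_cons]
    by_cases hiL : i ∈ L
    · exact ih _ hiL (fun i' h1 h2 => huniq i' (List.mem_cons_of_mem _ h1) h2)
    · have ha : a = i := by
        rcases List.mem_cons.1 hi with h | h
        · exact h.symm
        · exact absurd h hiL
      subst ha
      rw [foldA_ne T F L _ j (fun i' h1 h2 => hiL ((huniq i' (List.mem_cons_of_mem _ h1) h2) ▸ h1))]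
      show (if j = T a then F a else x j) = F a
      rw [if_pos hj.symm]

lemma foldB_ne (T lo : ℕ → ℕ) (L : List ℕ) (x : ℕ → ZMod 2) (j : ℕ)
    (h : ∀ i ∈ L, T i ≠ j) :
    (L.foldl (fun s i => applyGate s (lo i) (T i)) x) j = x j := by
  induction L generalizing x with
  | nil => rfl
  | cons a L ih =>
    rw [List.foldl_cons, ih _ (fun i hi => h i (List.mem_cons_of_mem _ hi))]
    exact applyGate_ne _ _ _ _ (fun he => h a (List.mem_cons_self) he.symm)

lemma foldB_eq (T lo : ℕ → ℕ) (L : List ℕ) (x : ℕ → ZMod 2) (i : ℕ) (hi : i ∈ L)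
    (hP : L.Pairwise (fun a b => T a ≠ T b))
    (hc : ∀ a ∈ L, ∀ b ∈ L, T b ∉ Finset.Ico (lo a) (T a)) :
    (L.foldl (fun s i => applyGate s (lo i) (T i)) x) (T i)
      = x (T i) + ∏ t ∈ Finset.Ico (lo i) (T i), x t := by
  induction L generalizing x with
  | nil => cases hi
  | cons a L ih =>
    rw [List.foldl_cons]
    rcases List.mem_cons.1 hi with rfl | hiL
    · rw [foldB_ne T lo L _ (T i) (fun b hb => ((List.pairwise_cons.1 hP).1 b hb).symm)]
      exact applyGate_eq _ _ _
    · have hTne : T i ≠ T a := fun he => ((List.pairwise_cons.1 hP).1 i hiL) he.symm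
      rw [ih _ hiL (List.pairwise_cons.1 hP).2
        (fun a' ha' b hb => hc a' (List.mem_cons_of_mem _ ha') b (List.mem_cons_of_mem _ hb))]
      rw [applyGate_ne _ _ _ _ hTne]
      congr 1
      apply Finset.prod_congr rfl
      intro t htm
      apply applyGate_ne
      intro he
      exact hc i hi a (List.mem_cons_self) (he ▸ htm)

lemma indexOf_append_cons (A : List ℕ) (a : ℕ) (l : List ℕ) (h : a ∉ A) :
    (A ++ a :: l).idxOf a = A.length := by
  induction A with
  | nil => simp
  | cons b B ih =>
    simp only [List.cons_append, List.idxOf_cons]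
    have hba : (b == a) = false := by
      simp only [beq_eq_false_iff_ne]; rintro rfl; exact h (List.mem_cons_self)
    simp [hba, ih (fun hh => h (List.mem_cons_of_mem _ hh))]

lemma prod_list_range' (a n : ℕ) (f : ℕ → ZMod 2) :
    ((List.range' a n).map f).prod = ∏ w ∈ Finset.Ico a (a + n), f w := by
  induction n generalizing a with
  | zero => simp
  | succ n ih =>
    rw [List.range'_succ, List.map_cons, List.prod_cons, ih,
      Finset.prod_eq_prod_Ico_succ_bot (by omega : a < a + (n+1))]
    have he : a + 1 + n = a + (n + 1) := by omega
    rw [he]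

lemma list_prod_eq (L : List ℕ) (f : ℕ → ZMod 2) :
    (L.map f).prod = ∏ i ∈ Finset.range L.length, f (L.getD i 0) := by
  induction L with
  | nil => simp
  | cons a L ih => simp [Finset.prod_range_succ', ih, mul_comm]

lemma prod_pos_Ico (Pre Mid Suf : List ℕ) (f : ℕ → ZMod 2) :
    ∏ p ∈ Finset.Ico Pre.length (Pre.length + Mid.length),
      f ((Pre ++ (Mid ++ Suf)).getD p 0) = (Mid.map f).prod := by
  rw [Finset.prod_Ico_eq_prod_range]
  simp only [Nat.add_sub_cancel_left]
  rw [list_prod_eq]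
  apply Finset.prod_congr rfl
  intro i hi
  rw [Finset.mem_range] at hi
  rw [List.getD_append_right _ _ _ _ (Nat.le_add_right _ _), Nat.add_sub_cancel_left,
    List.getD_append _ _ _ _ hi]

def gseq (β : ℕ → ℕ) (n : ℕ) (y : ℕ → ZMod 2) : ℕ → ZMod 2 :=
  (List.range n).foldl (fun s i => applyGate s (if i = 0 then 0 else β (i - 1)) (β i)) y

lemma gseq_succ (β : ℕ → ℕ) (n : ℕ) (y : ℕ → ZMod 2) :
    gseq β (n+1) y = applyGate (gseq β n y) (if n = 0 then 0 else β (n - 1)) (β n) := by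
  unfold gseq
  rw [List.range_succ, List.foldl_append]
  rfl

lemma gseq_ne (β : ℕ → ℕ) (n : ℕ) (y : ℕ → ZMod 2) (j : ℕ) (h : ∀ i < n, β i ≠ j) :
    gseq β n y j = y j := by
  induction n with
  | zero => rfl
  | succ n ih =>
    rw [gseq_succ, applyGate_ne _ _ _ _ (fun he => h n (by omega) he.symm),
      ih (fun i hi => h i (by omega))]

lemma gseq_eq (β : ℕ → ℕ) (n : ℕ) (hm : ∀ i j, i < j → j < n → β i < β j) (y : ℕ → ZMod 2) :
    ∀ i < n, gseq β n y (β i)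
      = y (β i) + ∏ t ∈ Finset.Ico (if i = 0 then 0 else β (i - 1)) (β i), gseq β n y t := by
  induction n with
  | zero => intro i hi; omega
  | succ n ih =>
    intro i hi
    have hstep : ∀ t < β n, gseq β (n+1) y t = gseq β n y t := by
      intro t ht
      rw [gseq_succ, applyGate_ne _ _ _ _ (by omega)]
    rcases Nat.lt_or_ge i n with hin | hin
    · have hlt : β i < β n := hm i n hin (by omega)
      rw [hstep (β i) hlt, ih (fun a b hab hbn => hm a b hab (by omega)) i hin]
      congr 1
      apply Finset.prod_congr rfl
      intro t htm
      rw [Finset.mem_Ico] at htm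
      rw [hstep t (by omega)]
    · have hieq : i = n := by omega
      subst hieq
      rw [gseq_succ, applyGate_eq,
        gseq_ne β i y (β i) (fun a ha he => by have := hm a i ha (by omega); omega)]
      congr 1
      apply Finset.prod_congr rfl
      intro t htm
      rw [Finset.mem_Ico] at htm
      rw [applyGate_ne _ _ _ _ (show t ≠ β i by omega)]


section Lclosed

variable (k : ℕ) (α : ℕ → ℕ)

lemma Lalpha_ne (x : ℕ → ZMod 2) (j : ℕ) (h : ∀ i < k - 1, α i ≠ j) :
    Lalpha k α x j = x j := by
  unfold Lalpha
  exact foldA_ne α _ (List.range (k-1)) x j (fun i hi => h i (List.mem_range.1 hi))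

variable (hmono : ∀ i j, i < j → j < k - 1 → α i < α j)

include hmono

lemma Lalpha_eq (x : ℕ → ZMod 2) (i : ℕ) (hi : i < k - 1) :
    Lalpha k α x (α i)
      = x (α i) + ∏ t ∈ Finset.Ico (if i = 0 then 0 else α (i - 1)) (α i), x t := by
  unfold Lalpha
  exact foldA_eq α _ (List.range (k-1)) x i (α i) (List.mem_range.2 hi) rfl
    (fun i' hi' he => by
      have hi'k := List.mem_range.1 hi'
      rcases lt_trichotomy i' i with h | h | h
      · have := hmono i' i h hi; omega
      · exact h
      · have := hmono i i' h hi'k; omega)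

lemma alpha_le (p q : ℕ) (hpq : p ≤ q) (hq : q ≤ k - 2) : α p ≤ α q := by
  rcases Nat.lt_or_ge p q with h | h
  · exact le_of_lt (hmono p q h (by omega))
  · have : p = q := by omega
    rw [this]

lemma alpha_lb : ∀ q, q ≤ k - 2 → ∀ p, p ≤ q → α p + (q - p) ≤ α q := by
  intro q
  induction q with
  | zero =>
    intro _ p hp
    have hp0 : p = 0 := by omega
    rw [hp0]
    omega
  | succ q ihq =>
    intro hq p hp
    rcases Nat.lt_or_ge p (q+1) with h | h
    · have h1 := ihq (by omega) p (by omega)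
      have h2 : α q < α (q+1) := hmono q (q+1) (by omega) (by omega)
      omega
    · have : p = q + 1 := by omega
      rw [this]; omega

lemma ginv_L (x : ℕ → ZMod 2) : ∀ i, i < k - 1 →
    gseq α (k - 1) (Lalpha k α x) (α i) = x (α i) := by
  intro i
  induction i using Nat.strong_induction_on with
  | _ i IH =>
    intro hik
    rw [gseq_eq α (k-1) hmono (Lalpha k α x) i hik,
      Lalpha_eq k α hmono x i hik]
    have hprod : ∏ t ∈ Finset.Ico (if i = 0 then 0 else α (i - 1)) (α i),
        gseq α (k - 1) (Lalpha k α x) t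
        = ∏ t ∈ Finset.Ico (if i = 0 then 0 else α (i - 1)) (α i), x t := by
      apply Finset.prod_congr rfl
      intro t htm
      rw [Finset.mem_Ico] at htm
      by_cases hT : ∃ q, q < k - 1 ∧ α q = t
      · obtain ⟨q, hq, rfl⟩ := hT
        have hi0 : i ≠ 0 := by
          intro h0
          rw [h0] at htm
          simp only [if_pos rfl] at htm
          have := alpha_le k α hmono 0 q (by omega) (by omega)
          omega
        rw [if_neg hi0] at htm
        have hq1 : i - 1 ≤ q := by
          by_contra hcon
          have := hmono q (i-1) (by omega) (by omega)
          omega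
        have hq2 : q < i := by
          by_contra hcon
          have := alpha_le k α hmono i q (by omega) (by omega)
          omega
        have hqe : q = i - 1 := by omega
        rw [hqe]
        exact IH (i-1) (by omega) (by omega)
      · push_neg at hT
        rw [gseq_ne α (k-1) _ t (fun a ha => hT a ha),
          Lalpha_ne k α x t (fun a ha => hT a ha)]
    rw [hprod, add_assoc, CharTwo.add_self_eq_zero, add_zero]

lemma L_ginv (y : ℕ → ZMod 2) : Lalpha k α (gseq α (k - 1) y) = y := by
  funext j
  by_cases hT : ∃ q, q < k - 1 ∧ α q = j
  · obtain ⟨q, hq, rfl⟩ := hT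
    rw [Lalpha_eq k α hmono _ q hq, gseq_eq α (k-1) hmono y q hq,
      add_assoc, CharTwo.add_self_eq_zero, add_zero]
  · push_neg at hT
    rw [Lalpha_ne k α _ j (fun a ha => hT a ha), gseq_ne α (k-1) _ j (fun a ha => hT a ha)]

lemma Lalpha_bijective : Function.Bijective (Lalpha k α) := by
  apply Function.bijective_iff_has_inverse.2
  refine ⟨gseq α (k - 1), ?_, ?_⟩
  · intro x
    funext j
    by_cases hT : ∃ q, q < k - 1 ∧ α q = j
    · obtain ⟨q, hq, rfl⟩ := hT
      exact ginv_L k α hmono x q hq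
    · push_neg at hT
      rw [gseq_ne α (k-1) _ j (fun a ha => hT a ha), Lalpha_ne k α _ j (fun a ha => hT a ha)]
  · exact L_ginv k α hmono

end Lclosed

section Xstruct

variable (k : ℕ) (α : ℕ → ℕ)

def mB : ℕ := (k + 1) / 2 - 2

def nG : ℕ := k / 2 - 1

def E2 (t : ℕ) : ℕ := if t + 1 ≤ mB k then α (2 * t + 2) else α (k - 3)

def chunkL (t : ℕ) : List ℕ :=
  α (2 * t) :: (List.range' (α (2 * t) + 1) (α (2 * t + 1) - α (2 * t) - 1) ++
    List.range' (α (2 * t + 1) + 1) (E2 k α t - α (2 * t + 1) - 1))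

variable (hk : 3 ≤ k) (hmono : ∀ i j, i < j → j < k - 1 → α i < α j)

include hk hmono

lemma cons_flatMap_eq : ∀ n, n ≤ mB k →
    α 0 :: (List.range' 1 n).flatMap (fun i =>
        List.range' (α (2 * i - 2) + 1) (α (2 * i - 1) - α (2 * i - 2) - 1) ++
        List.range' (α (2 * i - 1) + 1) (α (2 * i) - α (2 * i - 1)))
      = (List.range n).flatMap (chunkL k α) ++ [α (2 * n)] := by
  intro n
  induction n with
  | zero => intro _; simp
  | succ n ih =>
    intro hn
    have hmB : mB k = (k + 1) / 2 - 2 := rfl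
    have h1 : α (2*n) < α (2*n+1) := hmono _ _ (by omega) (by omega)
    have h2 : α (2*n+1) < α (2*n+2) := hmono _ _ (by omega) (by omega)
    have hr1 : List.range' 1 (n+1) = List.range' 1 n ++ [n+1] := by
      have h := List.range'_concat (step := 1) (s := 1) (n := n)
      have he : 1 + 1 * n = n + 1 := by omega
      rw [he] at h
      exact h
    rw [hr1, List.flatMap_append, List.flatMap_cons, List.flatMap_nil, List.append_nil,
      ← List.cons_append, ih (by omega)]
    have e1 : 2 * (n+1) - 2 = 2 * n := by omega
    have e2 : 2 * (n+1) - 1 = 2 * n + 1 := by omega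
    have e3 : 2 * (n+1) = 2 * n + 2 := by omega
    rw [e1, e2, e3]
    have e4 : α (2*n+2) - α (2*n+1) = (α (2*n+2) - α (2*n+1) - 1) + 1 := by omega
    rw [e4, List.range'_concat]
    have e5 : α (2*n+1) + 1 + 1 * (α (2*n+2) - α (2*n+1) - 1) = α (2*n+2) := by omega
    rw [e5, List.range_succ, List.flatMap_append, List.flatMap_cons, List.flatMap_nil,
      List.append_nil]
    have hE : E2 k α n = α (2*n+2) := by
      unfold E2
      rw [if_pos (by omega)]
    have hch : chunkL k α n = α (2*n) :: (List.range' (α (2*n) + 1) (α (2*n+1) - α (2*n) - 1) ++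
        List.range' (α (2*n+1) + 1) (α (2*n+2) - α (2*n+1) - 1)) := by
      unfold chunkL
      rw [hE]
    rw [hch]
    simp [List.append_assoc]

lemma Xlist_eq : Xlist k α = (List.range (nG k)).flatMap (chunkL k α) ++ [α (k - 3)] := by
  have hmB : mB k = (k + 1) / 2 - 2 := rfl
  have hnG : nG k = k / 2 - 1 := rfl
  have hc := cons_flatMap_eq k α hk hmono ((k+1)/2 - 2) le_rfl
  unfold Xlist
  by_cases hke : k % 2 = 0
  · rw [if_pos hke, hc]
    have e0 : 2 * ((k+1)/2 - 2) = k - 4 := by omega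
    rw [e0]
    have h1 : α (k-4) < α (k-3) := hmono _ _ (by omega) (by omega)
    have e4 : α (k - 3) - α (k - 4) = (α (k-3) - α (k-4) - 1) + 1 := by omega
    rw [e4, List.range'_concat]
    have e5 : α (k-4) + 1 + 1 * (α (k-3) - α (k-4) - 1) = α (k-3) := by omega
    rw [e5]
    have hnG2 : nG k = ((k+1)/2 - 2) + 1 := by omega
    rw [hnG2, List.range_succ, List.flatMap_append, List.flatMap_cons, List.flatMap_nil,
      List.append_nil]
    have hE : E2 k α ((k+1)/2 - 2) = α (k - 3) := by
      unfold E2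
      rw [if_neg (by rw [hmB]; omega)]
    have hz : α (k-3) - α (k-3) - 1 = 0 := by omega
    have hch : chunkL k α ((k+1)/2 - 2) = α (k-4) :: (List.range' (α (k-4) + 1) (α (k-3) - α (k-4) - 1) ++ []) := by
      unfold chunkL
      rw [hE]
      have ee : 2 * ((k+1)/2 - 2) + 1 = k - 3 := by omega
      rw [ee, e0, hz, List.range'_zero]
    rw [hch]
    simp [List.append_assoc]
  · rw [if_neg hke, List.append_nil, hc]
    have e0 : 2 * ((k+1)/2 - 2) = k - 3 := by omega
    have hnG2 : nG k = (k+1)/2 - 2 := by omega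
    rw [e0, hnG2]

lemma chunkL_bounds (t : ℕ) (ht : t < nG k) :
    ∀ w ∈ chunkL k α t, α (2 * t) ≤ w ∧ w < E2 k α t := by
  have hmB : mB k = (k + 1) / 2 - 2 := rfl
  have hnG : nG k = k / 2 - 1 := rfl
  have h1 : α (2*t) < α (2*t+1) := hmono _ _ (by omega) (by omega)
  have h2 : α (2*t+1) ≤ E2 k α t := by
    unfold E2
    split_ifs with hb
    · exact le_of_lt (hmono _ _ (by omega) (by omega))
    · have he : k - 3 = 2*t+1 := by omega
      rw [he]
  intro w hw
  rcases List.mem_cons.1 hw with rfl | hw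
  · exact ⟨le_rfl, lt_of_lt_of_le h1 h2⟩
  rcases List.mem_append.1 hw with hw | hw
  · rw [List.mem_range'_1] at hw
    omega
  · rw [List.mem_range'_1] at hw
    omega

lemma clen_eq : ∀ n, n ≤ nG k →
    ((List.range n).flatMap (chunkL k α)).length
      = if n = 0 then 0 else alpha' k α (n - 1) := by
  intro n
  induction n with
  | zero => intro _; simp
  | succ n ih =>
    intro hn
    have hmB : mB k = (k + 1) / 2 - 2 := rfl
    have hnG : nG k = k / 2 - 1 := rfl
    rw [List.range_succ, List.flatMap_append, List.flatMap_cons, List.flatMap_nil,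
      List.append_nil, List.length_append, ih (by omega)]
    have hlen : (chunkL k α n).length
        = 1 + (α (2*n+1) - α (2*n) - 1) + (E2 k α n - α (2*n+1) - 1) := by
      unfold chunkL
      rw [List.length_cons, List.length_append, List.length_range', List.length_range']
      omega
    rw [hlen, if_neg (Nat.succ_ne_zero n), Nat.succ_sub_one]
    have h1 : α (2*n) < α (2*n+1) := hmono _ _ (by omega) (by omega)
    have hlb : α 0 + 2*n ≤ α (2*n) := by
      have := alpha_lb k α hmono (2*n) (by omega) 0 (by omega)
      omega
    by_cases hbr : n + 1 ≤ mB k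
    · have hE : E2 k α n = α (2*n+2) := by
        unfold E2
        rw [if_pos hbr]
      have h2 : α (2*n+1) < α (2*n+2) := hmono _ _ (by omega) (by omega)
      have hA : alpha' k α n = α (2*n+2) - α 0 - (n+1) := by
        unfold alpha'
        rw [if_pos (show n+1 ≤ (k+1)/2-2 by omega)]
        rw [show 2*(n+1) = 2*n+2 from by omega]
      rcases Nat.eq_zero_or_pos n with rfl | hn0
      · rw [if_pos rfl]
        have ha0 : α (2*0) = α 0 := rfl
        have ha1 : α (2*0+1) = α 1 := rfl
        have ha2 : α (2*0+2) = α 2 := rfl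
        omega
      · rw [if_neg (by omega)]
        have hA' : alpha' k α (n-1) = α (2*n) - α 0 - n := by
          unfold alpha'
          rw [if_pos (show (n-1)+1 ≤ (k+1)/2-2 by omega)]
          rw [show 2*((n-1)+1) = 2*n from by omega, show (n-1)+1 = n from by omega]
        rw [hA', hA, hE]
        omega
    · have hkev : k % 2 = 0 ∧ n = (k+1)/2 - 2 := by omega
      have he3 : k - 3 = 2*n+1 := by omega
      have hE : E2 k α n = α (2*n+1) := by
        unfold E2
        rw [if_neg hbr, he3]
      have hA : alpha' k α n = α (2*n+1) - α 0 + 2 - k/2 := by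
        unfold alpha'
        rw [if_neg (show ¬ (n+1 ≤ (k+1)/2-2) by omega), he3]
      rcases Nat.eq_zero_or_pos n with rfl | hn0
      · rw [if_pos rfl]
        have ha0 : α (2*0) = α 0 := rfl
        have ha1 : α (2*0+1) = α 1 := rfl
        omega
      · rw [if_neg (by omega)]
        have hA' : alpha' k α (n-1) = α (2*n) - α 0 - n := by
          unfold alpha'
          rw [if_pos (show (n-1)+1 ≤ (k+1)/2-2 by omega)]
          rw [show 2*((n-1)+1) = 2*n from by omega, show (n-1)+1 = n from by omega]
        rw [hA', hA, hE]
        omega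

lemma X_split (t : ℕ) (ht : t < nG k) :
    ∃ suf, Xlist k α = ((List.range t).flatMap (chunkL k α) ++ chunkL k α t)
      ++ (E2 k α t :: suf) := by
  have hmB : mB k = (k + 1) / 2 - 2 := rfl
  have hnG : nG k = k / 2 - 1 := rfl
  rw [Xlist_eq k α hk hmono]
  have e1 : nG k - t = (nG k - t - 1) + 1 := by omega
  have hr : List.range (nG k) = List.range t ++ (t :: List.range' (t + 1) (nG k - t - 1)) := by
    rw [List.range_eq_range', List.range_eq_range' (n := t)]
    have h1 := List.range'_append (s := 0) (m := t) (n := nG k - t) (step := 1)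
    simp only [Nat.zero_add, Nat.one_mul] at h1
    rw [show t + (nG k - t) = nG k from by omega] at h1
    have h2 : List.range' t (nG k - t) = t :: List.range' (t + 1) (nG k - t - 1) := by
      conv_lhs => rw [e1]
      rw [List.range'_succ]
    rw [← h1, h2]
  rw [hr, List.flatMap_append, List.flatMap_cons]
  rcases Nat.eq_zero_or_pos (nG k - t - 1) with hr0 | hr0
  · rw [hr0, List.range'_zero, List.flatMap_nil, List.append_nil]
    have hEt : E2 k α t = α (k - 3) := by
      unfold E2
      split_ifs with hb
      · rw [show 2*t+2 = k-3 from by omega]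
      · rfl
    refine ⟨[], ?_⟩
    rw [hEt]
  · rw [show nG k - t - 1 = (nG k - t - 2) + 1 from by omega, List.range'_succ,
      List.flatMap_cons]
    have hEt : E2 k α t = α (2*t+2) := by
      unfold E2
      rw [if_pos (show t+1 ≤ mB k from by omega)]
    have htl : chunkL k α (t+1) = E2 k α t ::
        (List.range' (α (2*t+2) + 1) (α (2*t+3) - α (2*t+2) - 1) ++
         List.range' (α (2*t+3) + 1) (E2 k α (t+1) - α (2*t+3) - 1)) := by
      unfold chunkL
      rw [hEt, show 2*(t+1)+1 = 2*t+3 from by omega, show 2*(t+1) = 2*t+2 from by omega]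
    refine ⟨(List.range' (α (2*t+2) + 1) (α (2*t+3) - α (2*t+2) - 1) ++
         List.range' (α (2*t+3) + 1) (E2 k α (t+1) - α (2*t+3) - 1)) ++
      ((List.range' (t+2) (nG k - t - 2)).flatMap (chunkL k α) ++ [α (k-3)]), ?_⟩
    rw [htl]
    simp [List.append_assoc]

lemma len_pre_chunk (t : ℕ) (ht : t < nG k) :
    ((List.range t).flatMap (chunkL k α) ++ chunkL k α t).length = alpha' k α t := by
  have hstep : (List.range t).flatMap (chunkL k α) ++ chunkL k α t
      = (List.range (t+1)).flatMap (chunkL k α) := by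
    rw [List.range_succ, List.flatMap_append, List.flatMap_cons, List.flatMap_nil,
      List.append_nil]
  rw [hstep, clen_eq k α hk hmono (t+1) (by omega), if_neg (Nat.succ_ne_zero t),
    Nat.succ_sub_one]

lemma getD_X_alpha' (t : ℕ) (ht : t < nG k) :
    (Xlist k α).getD (alpha' k α t) 0 = E2 k α t := by
  obtain ⟨suf, hs⟩ := X_split k α hk hmono t ht
  have hlen := len_pre_chunk k α hk hmono t ht
  rw [hs, List.getD_append_right _ _ _ _ (le_of_eq hlen), hlen, Nat.sub_self,
    List.getD_cons_zero]

lemma indexOf_E2 (t : ℕ) (ht : t < nG k) :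
    (Xlist k α).idxOf (E2 k α t) = alpha' k α t := by
  have hmB : mB k = (k + 1) / 2 - 2 := rfl
  have hnG : nG k = k / 2 - 1 := rfl
  obtain ⟨suf, hs⟩ := X_split k α hk hmono t ht
  have hnotmem : E2 k α t ∉ (List.range t).flatMap (chunkL k α) ++ chunkL k α t := by
    intro hmem
    rcases List.mem_append.1 hmem with hmem | hmem
    · rw [List.mem_flatMap] at hmem
      obtain ⟨j, hj, hwj⟩ := hmem
      rw [List.mem_range] at hj
      have hb := chunkL_bounds k α hk hmono j (by omega) _ hwj
      have hlt : E2 k α j ≤ E2 k α t := by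
        unfold E2
        split_ifs with hb1 hb2 hb2
        · exact alpha_le k α hmono _ _ (by omega) (by omega)
        · exact alpha_le k α hmono _ _ (by omega) (by omega)
        · omega
        · omega
      omega
    · have hb := chunkL_bounds k α hk hmono t ht _ hmem
      omega
  rw [hs, indexOf_append_cons _ _ _ hnotmem, len_pre_chunk k α hk hmono t ht]

lemma prod_controls (t : ℕ) (ht : t < nG k) (f : ℕ → ZMod 2) :
    ∏ p ∈ Finset.Ico (if t = 0 then 0 else alpha' k α (t - 1)) (alpha' k α t),
      f ((Xlist k α).getD p 0) = ((chunkL k α t).map f).prod := by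
  obtain ⟨suf, hs⟩ := X_split k α hk hmono t ht
  have h1 : ((List.range t).flatMap (chunkL k α)).length
      = if t = 0 then 0 else alpha' k α (t-1) := clen_eq k α hk hmono t (by omega)
  have h2 : alpha' k α t
      = ((List.range t).flatMap (chunkL k α)).length + (chunkL k α t).length := by
    have h3 := len_pre_chunk k α hk hmono t ht
    rw [List.length_append] at h3
    omega
  rw [hs, List.append_assoc, ← h1, h2]
  exact prod_pos_Ico _ _ _ f

lemma alpha'_mono : ∀ a b, a < b → b < k / 2 - 1 → alpha' k α a < alpha' k α b := by
  intro a b hab hb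
  have hmB : mB k = (k + 1) / 2 - 2 := rfl
  have hnG : nG k = k / 2 - 1 := rfl
  have h0a : α 0 + (2*a+2) ≤ α (2*a+2) := by
    have := alpha_lb k α hmono (2*a+2) (by omega) 0 (by omega)
    omega
  have hA2 : alpha' k α a = α (2*a+2) - α 0 - (a+1) := by
    unfold alpha'
    rw [if_pos (show a+1 ≤ (k+1)/2-2 by omega), show 2*(a+1) = 2*a+2 from by omega]
  by_cases hbb : b + 1 ≤ mB k
  · have hA : alpha' k α b = α (2*b+2) - α 0 - (b+1) := by
      unfold alpha'
      rw [if_pos (show b+1 ≤ (k+1)/2-2 by omega), show 2*(b+1) = 2*b+2 from by omega]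
    have hstep := alpha_lb k α hmono (2*b+2) (by omega) (2*a+2) (by omega)
    omega
  · have he3 : k - 3 = 2*b+1 := by omega
    have hA : alpha' k α b = α (2*b+1) - α 0 + 2 - k/2 := by
      unfold alpha'
      rw [if_neg (show ¬ (b+1 ≤ (k+1)/2-2) by omega), he3]
    have hstep := alpha_lb k α hmono (2*b+1) (by omega) (2*a+2) (by omega)
    omega

lemma UX_ne (y : ℕ → ZMod 2) (w : ℕ) (hw : ∀ t, t < nG k → w ≠ E2 k α t) :
    UX k α y w = y w := by
  unfold UX
  split_ifs with hmem
  · have hidx : (Xlist k α).idxOf w < (Xlist k α).length := List.idxOf_lt_length_iff.2 hmem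
    have hgw : (Xlist k α).getD ((Xlist k α).idxOf w) 0 = w := by
      rw [List.getD_eq_getElem _ _ hidx, List.getElem_idxOf]
    rw [Lalpha_ne (k/2) (alpha' k α) _ ((Xlist k α).idxOf w)
      (fun t htm he => hw t htm (by rw [← hgw, ← he, getD_X_alpha' k α hk hmono t htm]))]
    rw [hgw]
  · rfl

lemma UX_target (y : ℕ → ZMod 2) (t : ℕ) (ht : t < nG k) :
    UX k α y (E2 k α t) = y (E2 k α t) + ((chunkL k α t).map y).prod := by
  obtain ⟨suf, hs⟩ := X_split k α hk hmono t ht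
  have hmem : E2 k α t ∈ Xlist k α := by
    rw [hs]
    exact List.mem_append.2 (Or.inr (List.mem_cons_self))
  unfold UX
  rw [if_pos hmem, indexOf_E2 k α hk hmono t ht]
  rw [Lalpha_eq (k/2) (alpha' k α) (alpha'_mono k α hk hmono) _ t ht]
  rw [getD_X_alpha' k α hk hmono t ht, prod_controls k α hk hmono t ht y]

end Xstruct

section ULUR

variable (k : ℕ) (α : ℕ → ℕ) (hk : 3 ≤ k) (hmono : ∀ i j, i < j → j < k - 1 → α i < α j)

include hk hmono

lemma hane : ∀ p q, p ≤ k-2 → q ≤ k-2 → p ≠ q → α p ≠ α q := by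
  intro p q hp hq hne he
  rcases Nat.lt_or_ge p q with h | h
  · have := hmono p q h (by omega)
    omega
  · have := hmono q p (by omega) (by omega)
    omega

lemma no_between (p w : ℕ) (hp : p + 1 ≤ k - 2) (h1 : α p < w) (h2 : w < α (p+1)) :
    ∀ q, q ≤ k - 2 → α q ≠ w := by
  intro q hq he
  rcases Nat.lt_or_ge q (p+1) with h | h
  · have := alpha_le k α hmono q p (by omega) (by omega)
    omega
  · have := alpha_le k α hmono (p+1) q h hq
    omega

lemma UL_ne (x : ℕ → ZMod 2) (j : ℕ)
    (h1 : ∀ i, 1 ≤ i → i ≤ mB k → j ≠ α (2*i-1)) (h2 : j ≠ α (k-2)) :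
    UL k α x j = x j := by
  have hmB : mB k = (k+1)/2 - 2 := rfl
  unfold UL
  rw [applyGate_ne _ _ _ _ h2]
  exact foldB_ne _ _ _ _ _ (fun i hi => by
    rw [List.mem_range'_1] at hi
    exact fun he => h1 i hi.1 (by omega) he.symm)

lemma UL_odd (x : ℕ → ZMod 2) (i : ℕ) (hi1 : 1 ≤ i) (hi2 : i ≤ mB k) :
    UL k α x (α (2*i-1)) = x (α (2*i-1)) + ∏ t ∈ Finset.Ico (α (2*i-2)) (α (2*i-1)), x t := by
  have hmB : mB k = (k+1)/2 - 2 := rfl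
  unfold UL
  rw [applyGate_ne _ _ _ _ (hane k α hk hmono (2*i-1) (k-2) (by omega) (by omega) (by omega))]
  exact foldB_eq _ _ _ x i (by rw [List.mem_range'_1]; omega)
    (List.Pairwise.imp_of_mem (fun {a b} ha hb hab => by
      rw [List.mem_range'_1] at ha hb
      exact hane k α hk hmono (2*a-1) (2*b-1) (by omega) (by omega) (by omega))
      (List.pairwise_lt_range' 1))
    (fun a ha b hb => by
      rw [List.mem_range'_1] at ha hb
      rw [Finset.mem_Ico]
      rintro ⟨hc1, hc2⟩
      have hr1 : ¬ (2*b-1 < 2*a-2) := fun hcon => by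
        have := hmono (2*b-1) (2*a-2) hcon (by omega)
        omega
      have hr2 : 2*b-1 < 2*a-1 := by
        by_contra hcon
        have := alpha_le k α hmono (2*a-1) (2*b-1) (by omega) (by omega)
        omega
      omega)

lemma UL_last (x : ℕ → ZMod 2) :
    UL k α x (α (k-2)) = x (α (k-2)) + ∏ t ∈ Finset.Ico (α (k-3)) (α (k-2)), x t := by
  have hmB : mB k = (k+1)/2 - 2 := rfl
  have hfold : ∀ w, α (k-3) ≤ w →
      ((List.range' 1 ((k+1)/2-2)).foldl
        (fun s i => applyGate s (α (2*i-2)) (α (2*i-1))) x) w = x w := by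
    intro w hw
    apply foldB_ne
    intro i hi
    rw [List.mem_range'_1] at hi
    have := hmono (2*i-1) (k-3) (by omega) (by omega)
    omega
  unfold UL
  rw [applyGate_eq, hfold (α (k-2)) (le_of_lt (hmono (k-3) (k-2) (by omega) (by omega)))]
  congr 1
  apply Finset.prod_congr rfl
  intro w hwm
  rw [Finset.mem_Ico] at hwm
  exact hfold w hwm.1

lemma UR_zero (z : ℕ → ZMod 2) :
    UR k α z (α 0) = z (α 0) + ∏ t ∈ Finset.Ico 0 (α 0), z t := by
  have hmB : mB k = (k+1)/2 - 2 := rfl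
  unfold UR
  rw [foldB_ne _ _ _ _ _ (fun i hi => by
    rw [List.mem_range'_1] at hi
    exact fun he => by
      have := hmono 0 (2*i) (by omega) (by omega)
      omega)]
  exact applyGate_eq _ _ _

lemma UR_ne (z : ℕ → ZMod 2) (j : ℕ) (h0 : j ≠ α 0)
    (h1 : ∀ i, 1 ≤ i → i ≤ mB k → j ≠ α (2*i)) :
    UR k α z j = z j := by
  have hmB : mB k = (k+1)/2 - 2 := rfl
  unfold UR
  rw [foldB_ne _ _ _ _ _ (fun i hi => by
    rw [List.mem_range'_1] at hi
    exact fun he => h1 i hi.1 (by omega) he.symm)]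
  exact applyGate_ne _ _ _ _ h0

lemma UR_even (z : ℕ → ZMod 2) (i : ℕ) (hi1 : 1 ≤ i) (hi2 : i ≤ mB k) :
    UR k α z (α (2*i)) = z (α (2*i)) + ∏ t ∈ Finset.Ico (α (2*i-1)) (α (2*i)), z t := by
  have hmB : mB k = (k+1)/2 - 2 := rfl
  have hα0 : α 0 < α (2*i-1) := hmono 0 (2*i-1) (by omega) (by omega)
  have h12 : α (2*i-1) < α (2*i) := hmono _ _ (by omega) (by omega)
  have hfb := foldB_eq (fun i => α (2*i)) (fun i => α (2*i-1))
    (List.range' 1 ((k+1)/2-2)) (applyGate z 0 (α 0)) i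
    (by rw [List.mem_range'_1]; omega)
    (List.Pairwise.imp_of_mem (fun {a b} ha hb hab => by
      rw [List.mem_range'_1] at ha hb
      exact hane k α hk hmono (2*a) (2*b) (by omega) (by omega) (by omega))
      (List.pairwise_lt_range' 1))
    (fun a ha b hb => by
      rw [List.mem_range'_1] at ha hb
      show α (2*b) ∉ Finset.Ico (α (2*a-1)) (α (2*a))
      rw [Finset.mem_Ico]
      rintro ⟨hc1, hc2⟩
      have hr1 : ¬ (2*b < 2*a-1) := fun hcon => by
        have := hmono (2*b) (2*a-1) hcon (by omega)
        omega
      have hr2 : 2*b < 2*a := by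
        by_contra hcon
        have := alpha_le k α hmono (2*a) (2*b) (by omega) (by omega)
        omega
      omega)
  beta_reduce at hfb
  unfold UR
  rw [hfb, applyGate_ne _ _ _ _ (hane k α hk hmono (2*i) 0 (by omega) (by omega) (by omega))]
  congr 1
  apply Finset.prod_congr rfl
  intro w hwm
  rw [Finset.mem_Ico] at hwm
  exact applyGate_ne _ _ _ _ (by omega)

lemma chunk_prod (x : ℕ → ZMod 2) (t : ℕ) (ht : t < nG k) :
    ((chunkL k α t).map (UL k α x)).prod
      = (∏ w ∈ Finset.Ico (α (2*t)) (α (2*t+1)), x w) *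
        ∏ w ∈ Finset.Ico (α (2*t+1) + 1) (E2 k α t), x w := by
  have hmB : mB k = (k+1)/2 - 2 := rfl
  have hnG : nG k = k/2 - 1 := rfl
  have h1 : α (2*t) < α (2*t+1) := hmono _ _ (by omega) (by omega)
  have hU : ∀ w ∈ chunkL k α t, UL k α x w = x w := by
    intro w hw
    rcases List.mem_cons.1 hw with rfl | hw2
    · exact UL_ne k α hk hmono x _
        (fun a ha1 ha2 => hane k α hk hmono (2*t) (2*a-1) (by omega) (by omega) (by omega))
        (hane k α hk hmono (2*t) (k-2) (by omega) (by omega) (by omega))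
    rcases List.mem_append.1 hw2 with hw3 | hw3
    · rw [List.mem_range'_1] at hw3
      have hnb := no_between k α hk hmono (2*t) w (by omega) (by omega) (by omega)
      exact UL_ne k α hk hmono x w (fun a ha1 ha2 he => hnb (2*a-1) (by omega) he.symm)
        (fun he => hnb (k-2) (by omega) he.symm)
    · rw [List.mem_range'_1] at hw3
      by_cases hbb : t + 1 ≤ mB k
      · have hE : E2 k α t = α (2*t+2) := by
          unfold E2
          rw [if_pos hbb]
        have h2' : α (2*t+1) < α (2*t+2) := hmono _ _ (by omega) (by omega)
        have hee : α (2*t+1+1) = α (2*t+2) := rfl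
        have hnb := no_between k α hk hmono (2*t+1) w (by omega) (by omega) (by omega)
        exact UL_ne k α hk hmono x w (fun a ha1 ha2 he => hnb (2*a-1) (by omega) he.symm)
          (fun he => hnb (k-2) (by omega) he.symm)
      · have hE : E2 k α t = α (2*t+1) := by
          unfold E2
          rw [if_neg hbb, show k-3 = 2*t+1 from by omega]
        omega
  by_cases hbb : t + 1 ≤ mB k
  · have hE : E2 k α t = α (2*t+2) := by
      unfold E2
      rw [if_pos hbb]
    have h2' : α (2*t+1) < α (2*t+2) := hmono _ _ (by omega) (by omega)
    have hm1 : α (2*t) ∈ chunkL k α t := List.mem_cons_self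
    rw [hE]
    unfold chunkL
    rw [List.map_cons, List.prod_cons, List.map_append, List.prod_append,
      prod_list_range', prod_list_range', hE,
      show α (2*t)+1 + (α (2*t+1) - α (2*t) - 1) = α (2*t+1) from by omega,
      show α (2*t+1)+1 + (α (2*t+2) - α (2*t+1) - 1) = α (2*t+2) from by omega,
      hU (α (2*t)) hm1]
    rw [Finset.prod_eq_prod_Ico_succ_bot h1 x, mul_assoc]
    congr 1
    congr 1
    · apply Finset.prod_congr rfl
      intro w hwm
      rw [Finset.mem_Ico] at hwm
      exact hU w (List.mem_cons_of_mem _ (List.mem_append_left _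
        ((List.mem_range'_1).2 ⟨by omega, by omega⟩)))
    · apply Finset.prod_congr rfl
      intro w hwm
      rw [Finset.mem_Ico] at hwm
      exact hU w (List.mem_cons_of_mem _ (List.mem_append_right _
        ((List.mem_range'_1).2 ⟨by omega, by omega⟩)))
  · have hE : E2 k α t = α (2*t+1) := by
      unfold E2
      rw [if_neg hbb, show k-3 = 2*t+1 from by omega]
    have hm1 : α (2*t) ∈ chunkL k α t := List.mem_cons_self
    rw [hE, Finset.Ico_eq_empty (by omega : ¬ (α (2*t+1) + 1 < α (2*t+1))),
      Finset.prod_empty, mul_one]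
    unfold chunkL
    rw [List.map_cons, List.prod_cons, List.map_append, List.prod_append,
      prod_list_range', prod_list_range', hE,
      show α (2*t)+1 + (α (2*t+1) - α (2*t) - 1) = α (2*t+1) from by omega,
      show α (2*t+1) - α (2*t+1) - 1 = 0 from by omega,
      show α (2*t+1)+1 + 0 = α (2*t+1)+1 from rfl,
      Finset.Ico_self, Finset.prod_empty, mul_one,
      hU (α (2*t)) hm1, Finset.prod_eq_prod_Ico_succ_bot h1 x]
    congr 1
    apply Finset.prod_congr rfl
    intro w hwm
    rw [Finset.mem_Ico] at hwm
    exact hU w (List.mem_cons_of_mem _ (List.mem_append_left _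
      ((List.mem_range'_1).2 ⟨by omega, by omega⟩)))

end ULUR

section Assembly

variable (k : ℕ) (α : ℕ → ℕ) (hk : 3 ≤ k) (hmono : ∀ i j, i < j → j < k - 1 → α i < α j)

include hk hmono

set_option maxHeartbeats 1000000 in
lemma decomp (x : ℕ → ZMod 2) : UR k α (UX k α (UL k α x)) = Lalpha k α x := by
  have hmB : mB k = (k+1)/2 - 2 := rfl
  have hnG : nG k = k/2 - 1 := rfl
  have hane' := hane k α hk hmono
  funext j
  by_cases hT : ∃ q, q < k - 1 ∧ α q = j
  case neg =>
    push_neg at hT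
    rw [UR_ne k α hk hmono _ j (fun he => hT 0 (by omega) he.symm)
        (fun i h1 h2 he => hT (2*i) (by omega) he.symm),
      UX_ne k α hk hmono _ j (fun t ht => by
        unfold E2
        split_ifs with hb
        · exact fun he => hT (2*t+2) (by omega) he.symm
        · exact fun he => hT (k-3) (by omega) he.symm),
      UL_ne k α hk hmono x j (fun i h1 h2 he => hT (2*i-1) (by omega) he.symm)
        (fun he => hT (k-2) (by omega) he.symm),
      Lalpha_ne k α x j (fun q hq => hT q hq)]
  case pos =>
  obtain ⟨i, hik, rfl⟩ := hT
  rw [Lalpha_eq k α hmono x i hik]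
  by_cases hi0 : i = 0
  · subst hi0
    rw [if_pos rfl]
    have hz0 : UX k α (UL k α x) (α 0) = x (α 0) := by
      rw [UX_ne k α hk hmono _ (α 0) (fun t ht => by
          unfold E2
          split_ifs with hb
          · exact hane' 0 (2*t+2) (by omega) (by omega) (by omega)
          · exact hane' 0 (k-3) (by omega) (by omega) (by omega)),
        UL_ne k α hk hmono x (α 0)
          (fun a h1 h2 => hane' 0 (2*a-1) (by omega) (by omega) (by omega))
          (hane' 0 (k-2) (by omega) (by omega) (by omega))]
    rw [UR_zero k α hk hmono _, hz0]
    congr 1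
    apply Finset.prod_congr rfl
    intro w hw
    rw [Finset.mem_Ico] at hw
    have hwa : ∀ q, q ≤ k-2 → α q ≠ w := by
      intro q hq he
      have := alpha_le k α hmono 0 q (by omega) hq
      omega
    rw [UX_ne k α hk hmono _ w (fun t ht => by
        unfold E2
        split_ifs with hb
        · exact fun he => hwa (2*t+2) (by omega) he.symm
        · exact fun he => hwa (k-3) (by omega) he.symm),
      UL_ne k α hk hmono x w (fun a h1 h2 he => hwa (2*a-1) (by omega) he.symm)
        (fun he => hwa (k-2) (by omega) he.symm)]
  by_cases hik2 : i = k - 2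
  · subst hik2
    rw [if_neg hi0, show k-2-1 = k-3 from by omega]
    rw [UR_ne k α hk hmono _ _ (hane' (k-2) 0 (by omega) (by omega) (by omega))
        (fun a h1 h2 => hane' (k-2) (2*a) (by omega) (by omega) (by omega)),
      UX_ne k α hk hmono _ _ (fun t ht => by
        unfold E2
        split_ifs with hb
        · exact hane' (k-2) (2*t+2) (by omega) (by omega) (by omega)
        · exact hane' (k-2) (k-3) (by omega) (by omega) (by omega)),
      UL_last k α hk hmono x]
  by_cases hodd : i % 2 = 1
  · by_cases hD' : i = k - 3
    · have hkev : k % 2 = 0 := by omega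
      subst hD'
      have htm : mB k < nG k := by omega
      have hE : E2 k α (mB k) = α (k-3) := by
        unfold E2
        rw [if_neg (by omega)]
      have hy : UL k α x (α (k-3)) = x (α (k-3)) :=
        UL_ne k α hk hmono x _
          (fun a h1 h2 => hane' (k-3) (2*a-1) (by omega) (by omega) (by omega))
          (hane' (k-3) (k-2) (by omega) (by omega) (by omega))
      have hcp := chunk_prod k α hk hmono x (mB k) htm
      rw [hE, show 2*(mB k)+1 = k-3 from by omega, show 2*(mB k) = k-4 from by omega,
        Finset.Ico_eq_empty (by omega : ¬ (α (k-3) + 1 < α (k-3))),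
        Finset.prod_empty, mul_one] at hcp
      rw [UR_ne k α hk hmono _ _ (hane' (k-3) 0 (by omega) (by omega) (by omega))
          (fun a h1 h2 => hane' (k-3) (2*a) (by omega) (by omega) (by omega)),
        ← hE, UX_target k α hk hmono _ (mB k) htm, hcp, hE, hy]
      rw [if_neg (by omega), show k-3-1 = k-4 from by omega]
    · obtain ⟨i', heq, h1', h2'⟩ : ∃ i', i = 2*i' - 1 ∧ 1 ≤ i' ∧ i' ≤ mB k :=
        ⟨(i+1)/2, by omega, by omega, by omega⟩
      subst heq
      rw [UR_ne k α hk hmono _ _ (hane' (2*i'-1) 0 (by omega) (by omega) (by omega))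
          (fun a h1 h2 => hane' (2*i'-1) (2*a) (by omega) (by omega) (by omega)),
        UX_ne k α hk hmono _ _ (fun t ht => by
          unfold E2
          split_ifs with hb
          · exact hane' (2*i'-1) (2*t+2) (by omega) (by omega) (by omega)
          · exact hane' (2*i'-1) (k-3) (by omega) (by omega) (by omega)),
        UL_odd k α hk hmono x i' h1' h2']
      rw [if_neg (by omega), show 2*i'-1-1 = 2*i'-2 from by omega]
  · obtain ⟨t, hte, ht1, ht2⟩ : ∃ t, i = 2*t+2 ∧ t+1 ≤ mB k ∧ t < nG k :=
      ⟨i/2 - 1, by omega, by omega, by omega⟩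
    subst hte
    have hE : E2 k α t = α (2*t+2) := by
      unfold E2
      rw [if_pos ht1]
    have hy2 : UL k α x (α (2*t+2)) = x (α (2*t+2)) :=
      UL_ne k α hk hmono x _
        (fun a h1 h2 => hane' (2*t+2) (2*a-1) (by omega) (by omega) (by omega))
        (hane' (2*t+2) (k-2) (by omega) (by omega) (by omega))
    have hz2 : UX k α (UL k α x) (α (2*t+2))
        = x (α (2*t+2)) + (∏ w ∈ Finset.Ico (α (2*t)) (α (2*t+1)), x w) *
            ∏ w ∈ Finset.Ico (α (2*t+1)+1) (α (2*t+2)), x w := by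
      rw [← hE, UX_target k α hk hmono _ t ht2, chunk_prod k α hk hmono x t ht2, hE, hy2]
    have hUR := UR_even k α hk hmono (UX k α (UL k α x)) (t+1) (by omega) (by omega)
    rw [show 2*(t+1)-1 = 2*t+1 from by omega, show 2*(t+1) = 2*t+2 from by omega] at hUR
    rw [hUR, hz2,
      Finset.prod_eq_prod_Ico_succ_bot (hmono (2*t+1) (2*t+2) (by omega) (by omega))
        (UX k α (UL k α x))]
    have hz3 : UX k α (UL k α x) (α (2*t+1))
        = x (α (2*t+1)) + ∏ w ∈ Finset.Ico (α (2*t)) (α (2*t+1)), x w := by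
      rw [UX_ne k α hk hmono _ _ (fun t' ht' => by
          unfold E2
          split_ifs with hb
          · exact hane' (2*t+1) (2*t'+2) (by omega) (by omega) (by omega)
          · exact hane' (2*t+1) (k-3) (by omega) (by omega) (by omega))]
      have hlo := UL_odd k α hk hmono x (t+1) (by omega) (by omega)
      rw [show 2*(t+1)-1 = 2*t+1 from by omega, show 2*(t+1)-2 = 2*t from by omega] at hlo
      rw [hlo]
    have hz4 : ∏ w ∈ Finset.Ico (α (2*t+1)+1) (α (2*t+2)), UX k α (UL k α x) w
        = ∏ w ∈ Finset.Ico (α (2*t+1)+1) (α (2*t+2)), x w := by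
      apply Finset.prod_congr rfl
      intro w hw
      rw [Finset.mem_Ico] at hw
      have hee : α (2*t+1+1) = α (2*t+2) := rfl
      have hnb := no_between k α hk hmono (2*t+1) w (by omega) (by omega) (by omega)
      rw [UX_ne k α hk hmono _ w (fun t' ht' => by
          unfold E2
          split_ifs with hb
          · exact fun he => hnb (2*t'+2) (by omega) he.symm
          · exact fun he => hnb (k-3) (by omega) he.symm),
        UL_ne k α hk hmono x w (fun a h1 h2 he => hnb (2*a-1) (by omega) he.symm)
          (fun he => hnb (k-2) (by omega) he.symm)]
    rw [hz3, hz4, if_neg (by omega : ¬ (2*t+2 = 0)), show 2*t+2-1 = 2*t+1 from by omega,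
      Finset.prod_eq_prod_Ico_succ_bot (hmono (2*t+1) (2*t+2) (by omega) (by omega)) x]
    have h2z : (2 : ZMod 2) = 0 := rfl
    linear_combination (∏ w ∈ Finset.Ico (α (2*t)) (α (2*t+1)), x w) *
      (∏ w ∈ Finset.Ico (α (2*t+1)+1) (α (2*t+2)), x w) * h2z

end Assembly

end MCXProof

/-- for every strictly increasing vector `α` of `k−1` nonnegative
integers with `k ≥ 3`, the operator `L_α` is a bijection and
`U_R ∘ U_{X'} ∘ U_L = L_α`. -/
theorem ladder_alpha_decomposition (k : ℕ) (hk : 3 ≤ k) (α : ℕ → ℕ)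
    (hmono : ∀ i j, i < j → j < k - 1 → α i < α j) :
    Function.Bijective (Lalpha k α) ∧
      ∀ x : ℕ → ZMod 2, UR k α (UX k α (UL k α x)) = Lalpha k α x :=
  ⟨MCXProof.Lalpha_bijective k α hmono, fun x => MCXProof.decomp k α hk hmono x⟩
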